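/- (Harmonic branching isomorphism.) Let m = p + q with q ≥ 1 and let n ∈ ℕ. For every harmonic polynomial G in m variables, homogeneous of degree n, there exists a unique polynomial F, homogeneous of degree n, such that Δ_v F = 0 and G - F = r²·Q for some polynomial Q. -/

import Mathlib

open MvPolynomial Finset

noncomputable section

/-- The full Laplacian `ΔP = ∑ ∂_i² P`. -/
def lap (m : ℕ) (P : MvPolynomial (Fin m) ℂ) : MvPolynomial (Fin m) ℂ :=
  ∑ i, pderiv i (pderiv i P)

/-- The polynomial `r² = ∑ X_i²`. -/
def r2 (m : ℕ) : MvPolynomial (Fin m) ℂ := ∑ i, X i ^ 2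

/-- The Laplacian in the `u`-variables (the first `p` variables). -/
def lapU (p q : ℕ) (F : MvPolynomial (Fin (p + q)) ℂ) : MvPolynomial (Fin (p + q)) ℂ :=
  ∑ i ∈ univ.filter (fun i : Fin (p + q) => (i : ℕ) < p), pderiv i (pderiv i F)

/-- The Laplacian in the `v`-variables (the last `q` variables). -/
def lapV (p q : ℕ) (F : MvPolynomial (Fin (p + q)) ℂ) : MvPolynomial (Fin (p + q)) ℂ :=
  ∑ i ∈ univ.filter (fun i : Fin (p + q) => p ≤ (i : ℕ)), pderiv i (pderiv i F)

/-- `|u|² = ∑_{i<p} X_i²`. -/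
def u2 (p q : ℕ) : MvPolynomial (Fin (p + q)) ℂ :=
  ∑ i ∈ univ.filter (fun i : Fin (p + q) => (i : ℕ) < p), X i ^ 2

/-- `|v|² = ∑_{i≥p} X_i²`. -/
def v2 (p q : ℕ) : MvPolynomial (Fin (p + q)) ℂ :=
  ∑ i ∈ univ.filter (fun i : Fin (p + q) => p ≤ (i : ℕ)), X i ^ 2

/-- The Fischer inner product `⟨P,Q⟩ = ∑_α (∏_i α_i!)·conj(coeff_α P)·coeff_α Q`. -/
def fischer (m : ℕ) (P Q : MvPolynomial (Fin m) ℂ) : ℂ :=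
  ∑ α ∈ P.support, (∏ i, ((α i).factorial : ℂ)) * (starRingEnd ℂ) (coeff α P) * coeff α Q

namespace Branch

lemma coeff_pderiv {m : ℕ} (i : Fin m) (P : MvPolynomial (Fin m) ℂ) (β : Fin m →₀ ℕ) :
    coeff β (pderiv i P) = ((β i : ℂ) + 1) * coeff (β + Finsupp.single i 1) P := by
  induction P using MvPolynomial.induction_on' with
  | add f g hf hg => simp [hf, hg, mul_add]
  | monomial s a =>
    rw [pderiv_monomial, coeff_monomial, coeff_monomial]
    by_cases h : s = β + Finsupp.single i 1
    · subst h
      rw [if_pos, if_pos rfl]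
      · push_cast [Finsupp.add_apply, Finsupp.single_eq_same]; ring
      · ext j
        by_cases hj : j = i
        · subst hj; simp [Finsupp.add_apply, Finsupp.single_eq_same]
        · simp [Finsupp.add_apply, Finsupp.single_eq_of_ne' (Ne.symm (by exact fun hh => hj hh.symm)), hj]
    · rw [if_neg h, mul_zero]
      by_cases h2 : s - Finsupp.single i 1 = β
      · have hsi : s i = 0 := by
          by_contra hsi
          apply h
          ext j
          by_cases hj : j = i
          · subst hj
            have := DFunLike.congr_fun h2 j
            simp only [Finsupp.tsub_apply, Finsupp.single_eq_same] at this
            simp [Finsupp.add_apply, Finsupp.single_eq_same]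
            omega
          · have := DFunLike.congr_fun h2 j
            simp only [Finsupp.tsub_apply,
              Finsupp.single_eq_of_ne' (Ne.symm hj)] at this
            simp [Finsupp.add_apply, Finsupp.single_eq_of_ne' (Ne.symm hj)]
            omega
        · rw [if_pos h2, hsi]; simp
      · rw [if_neg h2]

lemma fischer_eq_union {m : ℕ} (P Q : MvPolynomial (Fin m) ℂ) :
    fischer m P Q = ∑ α ∈ P.support ∪ Q.support,
      (∏ i, ((α i).factorial : ℂ)) * (starRingEnd ℂ) (coeff α P) * coeff α Q := by
  rw [fischer]
  exact Finset.sum_subset Finset.subset_union_left (fun x _ hx => by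
    rw [MvPolynomial.notMem_support_iff.mp hx]; simp)

lemma fischer_eq_right {m : ℕ} (P Q : MvPolynomial (Fin m) ℂ) :
    fischer m P Q = ∑ α ∈ Q.support,
      (∏ i, ((α i).factorial : ℂ)) * (starRingEnd ℂ) (coeff α P) * coeff α Q := by
  rw [fischer_eq_union]
  exact (Finset.sum_subset Finset.subset_union_right (fun x _ hx => by
    rw [MvPolynomial.notMem_support_iff.mp hx]; simp)).symm

lemma fischer_zero_right {m : ℕ} (P : MvPolynomial (Fin m) ℂ) : fischer m P 0 = 0 := by
  simp [fischer]

lemma fischer_add_left {m : ℕ} (P₁ P₂ Q : MvPolynomial (Fin m) ℂ) :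
    fischer m (P₁ + P₂) Q = fischer m P₁ Q + fischer m P₂ Q := by
  rw [fischer_eq_right, fischer_eq_right, fischer_eq_right, ← Finset.sum_add_distrib]
  refine Finset.sum_congr rfl fun α _ => ?_
  rw [coeff_add, map_add]; ring

lemma fischer_sum_left {m : ℕ} {ι : Type*} (s : Finset ι) (f : ι → MvPolynomial (Fin m) ℂ)
    (Q : MvPolynomial (Fin m) ℂ) :
    fischer m (∑ i ∈ s, f i) Q = ∑ i ∈ s, fischer m (f i) Q := by
  classical
  induction s using Finset.induction with
  | empty => simp [fischer_eq_right]
  | insert _ _ h ih => rw [Finset.sum_insert h, Finset.sum_insert h, fischer_add_left, ih]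

lemma fischer_sum_right {m : ℕ} {ι : Type*} (s : Finset ι) (P : MvPolynomial (Fin m) ℂ)
    (g : ι → MvPolynomial (Fin m) ℂ) :
    fischer m P (∑ i ∈ s, g i) = ∑ i ∈ s, fischer m P (g i) := by
  rw [fischer]
  simp_rw [MvPolynomial.coeff_sum, Finset.mul_sum]
  rw [Finset.sum_comm]
  refine Finset.sum_congr rfl fun i _ => ?_
  rw [fischer]

lemma fischer_X_mul {m : ℕ} (i : Fin m) (P Q : MvPolynomial (Fin m) ℂ) :
    fischer m (X i * P) Q = fischer m P (pderiv i Q) := by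
  rw [fischer, fischer, MvPolynomial.support_X_mul, Finset.sum_map]
  refine Finset.sum_congr rfl fun α hα => ?_
  have he : (addLeftEmbedding (Finsupp.single i 1)) α = Finsupp.single i 1 + α := rfl
  rw [he, MvPolynomial.coeff_X_mul, coeff_pderiv]
  have hfac : (∏ j, (((Finsupp.single i 1 + α : Fin m →₀ ℕ) j).factorial : ℂ))
      = ((α i : ℂ) + 1) * ∏ j, ((α j).factorial : ℂ) := by
    rw [← Finset.mul_prod_erase univ _ (mem_univ i), ← Finset.mul_prod_erase univ
      (fun j => ((α j).factorial : ℂ)) (mem_univ i)]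
    have h1 : ((Finsupp.single i 1 : Fin m →₀ ℕ) + α) i = α i + 1 := by
      simp [Finsupp.add_apply, Finsupp.single_eq_same]; omega
    have h2 : ∀ j ∈ univ.erase i, ((((Finsupp.single i 1 : Fin m →₀ ℕ) + α) j).factorial : ℂ)
        = ((α j).factorial : ℂ) := by
      intro j hj
      have : j ≠ i := (Finset.mem_erase.mp hj).1
      simp [Finsupp.add_apply, Finsupp.single_eq_of_ne' (Ne.symm this)]
    rw [Finset.prod_congr rfl h2, h1, Nat.factorial_succ]
    push_cast; ring
  rw [hfac, add_comm (Finsupp.single i 1) α]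
  ring

lemma fischer_v2_mul (p q : ℕ) (B F : MvPolynomial (Fin (p + q)) ℂ) :
    fischer (p + q) (v2 p q * B) F = fischer (p + q) B (lapV p q F) := by
  rw [v2, Finset.sum_mul, fischer_sum_left, lapV, fischer_sum_right]
  refine Finset.sum_congr rfl fun i _ => ?_
  rw [pow_two, mul_assoc, fischer_X_mul, fischer_X_mul]

lemma fischer_self_eq_zero {m : ℕ} (P : MvPolynomial (Fin m) ℂ)
    (h : fischer m P P = 0) : P = 0 := by
  have hre : fischer m P P
      = ((∑ α ∈ P.support, (∏ i, ((α i).factorial : ℝ)) * Complex.normSq (coeff α P) : ℝ) : ℂ) := by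
    rw [fischer]
    push_cast
    refine Finset.sum_congr rfl fun α _ => ?_
    rw [mul_assoc, Complex.normSq_eq_conj_mul_self]
  rw [hre] at h
  have h0 : (∑ α ∈ P.support, (∏ i, ((α i).factorial : ℝ)) * Complex.normSq (coeff α P)) = 0 :=
    mod_cast h
  have hterm : ∀ α ∈ P.support, (∏ i, ((α i).factorial : ℝ)) * Complex.normSq (coeff α P) = 0 := by
    intro α hα
    refine (Finset.sum_eq_zero_iff_of_nonneg fun β _ => ?_).mp h0 α hα
    exact mul_nonneg (by positivity) (Complex.normSq_nonneg _)
  ext α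
  rw [coeff_zero]
  by_contra hc
  have hα : α ∈ P.support := MvPolynomial.mem_support_iff.mpr hc
  have := hterm α hα
  have hfac : (∏ i, ((α i).factorial : ℝ)) > 0 := by positivity
  have : Complex.normSq (coeff α P) = 0 := by
    rcases mul_eq_zero.mp this with h' | h'
    · exact absurd h' (ne_of_gt hfac)
    · exact h'
  exact hc (Complex.normSq_eq_zero.mp this)

/-- Core injectivity: `v`-harmonic and divisible by `v2` implies zero. -/
lemma harmonic_v2_eq_zero (p q : ℕ) (F B : MvPolynomial (Fin (p + q)) ℂ)
    (hF : lapV p q F = 0) (hFB : F = v2 p q * B) : F = 0 := by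
  apply fischer_self_eq_zero
  calc fischer (p + q) F F = fischer (p + q) (v2 p q * B) F := by rw [← hFB]
    _ = fischer (p + q) B (lapV p q F) := fischer_v2_mul p q B F
    _ = 0 := by rw [hF, fischer_zero_right]


lemma degree_eq_sum_univ {m : ℕ} (α : Fin m →₀ ℕ) :
    Finsupp.degree α = ∑ i, α i :=
  Finset.sum_subset (Finset.subset_univ _)
    (fun i _ h => Finsupp.notMem_support_iff.mp h)

section Deg
variable (p q : ℕ)

/-- v-degree of an exponent. -/
def dV (α : Fin (p + q) →₀ ℕ) : ℕ :=
  ∑ i ∈ univ.filter (fun i : Fin (p + q) => p ≤ (i : ℕ)), α i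


lemma dV_add (α β : Fin (p + q) →₀ ℕ) : dV p q (α + β) = dV p q α + dV p q β := by
  simp [dV, Finsupp.add_apply, Finset.sum_add_distrib]

lemma degree_add' {m : ℕ} (α β : Fin m →₀ ℕ) :
    Finsupp.degree (α + β) = Finsupp.degree α + Finsupp.degree β := by
  simp [degree_eq_sum_univ, Finsupp.add_apply, Finset.sum_add_distrib]

lemma degree_single' {m : ℕ} (i : Fin m) (k : ℕ) :
    Finsupp.degree (Finsupp.single i k) = k := by
  rw [degree_eq_sum_univ, Finset.sum_eq_single i]
  · exact Finsupp.single_eq_same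
  · intro b _ hb; exact Finsupp.single_eq_of_ne' (Ne.symm hb)
  · intro h; exact absurd (mem_univ i) h

lemma dV_single_of_le (i : Fin (p + q)) (k : ℕ) (hi : p ≤ (i : ℕ)) :
    dV p q (Finsupp.single i k) = k := by
  rw [dV, Finset.sum_eq_single i]
  · exact Finsupp.single_eq_same
  · intro b _ hb; exact Finsupp.single_eq_of_ne' (Ne.symm hb)
  · intro h; exact absurd (Finset.mem_filter.mpr ⟨mem_univ i, hi⟩) h

lemma dV_single_of_lt (i : Fin (p + q)) (k : ℕ) (hi : (i : ℕ) < p) :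
    dV p q (Finsupp.single i k) = 0 := by
  rw [dV]
  refine Finset.sum_eq_zero fun j hj => ?_
  have : p ≤ (j : ℕ) := (Finset.mem_filter.mp hj).2
  exact Finsupp.single_eq_of_ne (fun h => by subst h; omega)

end Deg

section Supp
variable (p q : ℕ)

lemma coeff_lapV (F : MvPolynomial (Fin (p + q)) ℂ) (β : Fin (p + q) →₀ ℕ) :
    coeff β (lapV p q F) = ∑ i ∈ univ.filter (fun i : Fin (p + q) => p ≤ (i : ℕ)),
      coeff β (pderiv i (pderiv i F)) := by
  rw [lapV, MvPolynomial.coeff_sum]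

lemma lapV_supp (F : MvPolynomial (Fin (p + q)) ℂ) (β : Fin (p + q) →₀ ℕ)
    (h : coeff β (lapV p q F) ≠ 0) :
    ∃ i : Fin (p + q), p ≤ (i : ℕ) ∧
      coeff (β + Finsupp.single i 1 + Finsupp.single i 1) F ≠ 0 := by
  rw [coeff_lapV] at h
  obtain ⟨i, hi, hne⟩ := Finset.exists_ne_zero_of_sum_ne_zero h
  refine ⟨i, (Finset.mem_filter.mp hi).2, ?_⟩
  rw [coeff_pderiv, coeff_pderiv] at hne
  intro h0
  rw [h0] at hne
  simp at hne

lemma mul_sumsq_supp {m : ℕ} (s : Finset (Fin m)) (B : MvPolynomial (Fin m) ℂ)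
    (β : Fin m →₀ ℕ) (h : coeff β ((∑ i ∈ s, X i ^ 2) * B) ≠ 0) :
    ∃ i ∈ s, ∃ α, coeff α B ≠ 0 ∧ β = Finsupp.single i 2 + α := by
  rw [Finset.sum_mul, MvPolynomial.coeff_sum] at h
  obtain ⟨i, hi, hne⟩ := Finset.exists_ne_zero_of_sum_ne_zero h
  rw [X_pow_eq_monomial, coeff_monomial_mul'] at hne
  by_cases hle : Finsupp.single i 2 ≤ β
  · rw [if_pos hle, one_mul] at hne
    exact ⟨i, hi, β - Finsupp.single i 2, hne, by rw [add_comm, tsub_add_cancel_of_le hle]⟩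
  · rw [if_neg hle] at hne; exact absurd rfl hne

/-- `Slin` : the linear map `B ↦ Δ_v (v² B)`. -/
def Slin : MvPolynomial (Fin (p + q)) ℂ →ₗ[ℂ] MvPolynomial (Fin (p + q)) ℂ where
  toFun B := lapV p q (v2 p q * B)
  map_add' a b := by
    show lapV p q (v2 p q * (a + b)) = lapV p q (v2 p q * a) + lapV p q (v2 p q * b)
    rw [mul_add]; simp [lapV, map_add, Finset.sum_add_distrib]
  map_smul' c a := by
    show lapV p q (v2 p q * (c • a)) = c • lapV p q (v2 p q * a)
    rw [mul_smul_comm]; simp [lapV, map_smul, Finset.smul_sum]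

lemma Slin_supp (P : MvPolynomial (Fin (p + q)) ℂ) (β : Fin (p + q) →₀ ℕ)
    (h : coeff β (Slin p q P) ≠ 0) :
    ∃ α, coeff α P ≠ 0 ∧ Finsupp.degree β = Finsupp.degree α ∧ dV p q β = dV p q α := by
  obtain ⟨i, hip, hi⟩ := lapV_supp p q _ β h
  obtain ⟨j, hj, α, hα, heq⟩ := mul_sumsq_supp _ _ _ hi
  have hjp : p ≤ (j : ℕ) := (Finset.mem_filter.mp hj).2
  refine ⟨α, hα, ?_, ?_⟩
  · have := congrArg Finsupp.degree heq
    rw [degree_add', degree_add', degree_add'] at this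
    simp only [degree_single'] at this
    omega
  · have := congrArg (dV p q) heq
    rw [dV_add, dV_add, dV_add, dV_single_of_le _ _ _ _ hip,
      dV_single_of_le _ _ _ _ hjp] at this
    omega

/-- The finite-dimensional space of polynomials with exponent constraints. -/
def MM (d k : ℕ) : Submodule ℂ (MvPolynomial (Fin (p + q)) ℂ) :=
  Submodule.span ℂ ((fun α => monomial α (1 : ℂ)) ''
    {α | Finsupp.degree α ≤ d ∧ dV p q α ≤ k})

instance MM_findim (d k : ℕ) : FiniteDimensional ℂ (MM p q d k) := by
  apply FiniteDimensional.span_of_finite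
  apply Set.Finite.image
  exact (Finsupp.finite_of_degree_le d).subset (fun α hα => hα.1)

lemma mem_MM_iff (d k : ℕ) (P : MvPolynomial (Fin (p + q)) ℂ) :
    P ∈ MM p q d k ↔ ∀ β, coeff β P ≠ 0 → Finsupp.degree β ≤ d ∧ dV p q β ≤ k := by
  constructor
  · intro hP
    refine Submodule.span_induction ?_ ?_ ?_ ?_ hP
    · rintro x ⟨α, hα, rfl⟩ β hβ
      rw [coeff_monomial] at hβ
      by_cases hab : α = β
      · subst hab; exact hα
      · rw [if_neg hab] at hβ; exact absurd rfl hβ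
    · intro β hβ; simp at hβ
    · intro a b _ _ ha hb β hβ
      rw [coeff_add] at hβ
      by_cases h1 : coeff β a ≠ 0
      · exact ha β h1
      · push_neg at h1
        exact hb β (by rw [h1, zero_add] at hβ; exact hβ)
    · intro c a _ ha β hβ
      rw [MvPolynomial.coeff_smul] at hβ
      exact ha β (fun h => hβ (by rw [h, smul_zero]))
  · intro h
    rw [MvPolynomial.as_sum P]
    refine Submodule.sum_mem _ fun v hv => ?_
    have : monomial v (coeff v P) = (coeff v P) • monomial v (1 : ℂ) := by
      rw [MvPolynomial.smul_monomial, smul_eq_mul, mul_one]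
    rw [this]
    exact Submodule.smul_mem _ _ (Submodule.subset_span
      ⟨v, h v (MvPolynomial.mem_support_iff.mp hv), rfl⟩)

lemma v2_ne_zero (hq : 1 ≤ q) : v2 p q ≠ 0 := by
  intro h0
  have hlt : p < p + q := by omega
  have : coeff (Finsupp.single (⟨p, hlt⟩ : Fin (p + q)) 2) (v2 p q) = 1 := by
    rw [v2, MvPolynomial.coeff_sum]
    rw [Finset.sum_eq_single (⟨p, hlt⟩ : Fin (p + q))]
    · rw [X_pow_eq_monomial, coeff_monomial, if_pos rfl]
    · intro b _ hb
      rw [X_pow_eq_monomial, coeff_monomial, if_neg]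
      intro hcon
      exact hb (by
        have := (Finsupp.single_left_inj (two_ne_zero)).mp hcon
        exact this)
    · intro hcon
      refine absurd (Finset.mem_filter.mpr ⟨Finset.mem_univ _, ?_⟩) hcon
      simp
  rw [h0, coeff_zero] at this
  exact one_ne_zero this.symm

lemma Slin_inj (hq : 1 ≤ q) (B : MvPolynomial (Fin (p + q)) ℂ)
    (h : Slin p q B = 0) : B = 0 := by
  have h2 : v2 p q * B = 0 := harmonic_v2_eq_zero p q _ B h rfl
  rcases mul_eq_zero.mp h2 with h' | h'
  · exact absurd h' (v2_ne_zero p q hq)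
  · exact h'

lemma Slin_surj (hq : 1 ≤ q) (d k : ℕ) (C : MvPolynomial (Fin (p + q)) ℂ)
    (hC : C ∈ MM p q d k) : ∃ B ∈ MM p q d k, lapV p q (v2 p q * B) = C := by
  have hstab : ∀ x ∈ MM p q d k, Slin p q x ∈ MM p q d k := by
    intro x hx
    rw [mem_MM_iff] at hx ⊢
    intro β hβ
    obtain ⟨α, hα, h1, h2⟩ := Slin_supp p q x β hβ
    rw [h1, h2]; exact hx α hα
  let f := (Slin p q).restrict hstab
  have hinj : Function.Injective f := by
    rw [← LinearMap.ker_eq_bot, eq_bot_iff]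
    rintro ⟨x, hx⟩ hker
    have : Slin p q x = 0 := by
      have := congrArg (fun y : MM p q d k => (y : MvPolynomial (Fin (p + q)) ℂ)) hker
      simpa [f, LinearMap.restrict_apply] using this
    simp [Slin_inj p q hq x this]
  obtain ⟨⟨B, hB⟩, hfB⟩ := (LinearMap.injective_iff_surjective.mp hinj) ⟨C, hC⟩
  refine ⟨B, hB, ?_⟩
  have := congrArg (fun y : MM p q d k => (y : MvPolynomial (Fin (p + q)) ℂ)) hfB
  simpa [f, LinearMap.restrict_apply, Slin] using this

end Supp

section Exist
variable (p q : ℕ)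

lemma r2_eq : r2 (p + q) = u2 p q + v2 p q := by
  rw [r2, u2, v2, ← Finset.sum_filter_add_sum_filter_not univ
    (fun i : Fin (p + q) => (i : ℕ) < p)]
  congr 1
  apply Finset.sum_congr _ (fun _ _ => rfl)
  apply Finset.filter_congr
  intro i _
  simp [Nat.not_lt]

lemma lapV_sub (A B : MvPolynomial (Fin (p + q)) ℂ) :
    lapV p q (A - B) = lapV p q A - lapV p q B := by
  simp [lapV, map_sub, Finset.sum_sub_distrib]

lemma degree_eq_msum (β : Fin (p + q) →₀ ℕ) :
    Finsupp.degree β = β.sum fun _ e => e := rfl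

/-- Fischer-type decomposition: P = A + v²·B with Δ_v A = 0, with degree control on B. -/
lemma decomp (hq : 1 ≤ q) (d k : ℕ) (P : MvPolynomial (Fin (p + q)) ℂ)
    (hP : ∀ β, coeff β P ≠ 0 → Finsupp.degree β ≤ d ∧ dV p q β ≤ k) :
    ∃ A B, P = A + v2 p q * B ∧ lapV p q A = 0 ∧
      (∀ β, coeff β B ≠ 0 → Finsupp.degree β ≤ d ∧ dV p q β + 2 ≤ k) := by
  by_cases hk : k < 2
  · refine ⟨P, 0, by simp, ?_, by simp⟩
    ext β
    rw [coeff_zero]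
    by_contra h
    obtain ⟨i, hip, hc⟩ := lapV_supp p q P β h
    have h2 := (hP _ hc).2
    rw [dV_add, dV_add, dV_single_of_le _ _ _ _ hip] at h2
    omega
  · push_neg at hk
    have hC : lapV p q P ∈ MM p q d (k - 2) := by
      rw [mem_MM_iff]
      intro β hβ
      obtain ⟨i, hip, hc⟩ := lapV_supp p q P β hβ
      obtain ⟨h1, h2⟩ := hP _ hc
      rw [dV_add, dV_add, dV_single_of_le _ _ _ _ hip] at h2
      rw [degree_add', degree_add'] at h1
      simp only [degree_single'] at h1
      exact ⟨by omega, by omega⟩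
    obtain ⟨B, hB, hSB⟩ := Slin_surj p q hq d (k - 2) _ hC
    rw [mem_MM_iff] at hB
    refine ⟨P - v2 p q * B, B, by ring, ?_, fun β hβ => ?_⟩
    · rw [lapV_sub, hSB, sub_self]
    · obtain ⟨h1, h2⟩ := hB β hβ
      exact ⟨h1, by omega⟩

lemma u2_mul_dV (B : MvPolynomial (Fin (p + q)) ℂ) (β : Fin (p + q) →₀ ℕ)
    (h : coeff β (u2 p q * B) ≠ 0) :
    ∃ α, coeff α B ≠ 0 ∧ dV p q β = dV p q α := by
  rw [u2] at h
  obtain ⟨j, hj, α, hα, heq⟩ := mul_sumsq_supp _ _ _ h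
  have hjp : (j : ℕ) < p := (Finset.mem_filter.mp hj).2
  refine ⟨α, hα, ?_⟩
  rw [heq, dV_add, dV_single_of_lt _ _ _ _ hjp, zero_add]

/-- Existence of decomposition modulo r². -/
lemma exist_modr2 (hq : 1 ≤ q) (k : ℕ) :
    ∀ P : MvPolynomial (Fin (p + q)) ℂ, (∀ β, coeff β P ≠ 0 → dV p q β ≤ k) →
      ∃ F Q, lapV p q F = 0 ∧ P = F + r2 (p + q) * Q := by
  induction k using Nat.strong_induction_on with
  | _ k ih =>
    intro P hP
    have hPd : ∀ β, coeff β P ≠ 0 → Finsupp.degree β ≤ P.totalDegree ∧ dV p q β ≤ k := by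
      intro β hβ
      refine ⟨?_, hP β hβ⟩
      rw [degree_eq_msum]
      exact MvPolynomial.le_totalDegree (MvPolynomial.mem_support_iff.mpr hβ)
    obtain ⟨A, B, hPAB, hA, hB⟩ := decomp p q hq (P.totalDegree) k P hPd
    by_cases hB0 : B = 0
    · exact ⟨A, 0, hA, by rw [hPAB, hB0]; ring⟩
    · obtain ⟨β₀, hβ₀⟩ := MvPolynomial.ne_zero_iff.mp hB0
      have hk2 : 2 ≤ k := le_trans (by omega) (hB β₀ hβ₀).2
      have hu2B : ∀ β, coeff β (u2 p q * B) ≠ 0 → dV p q β ≤ k - 2 := by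
        intro β hβ
        obtain ⟨α, hα, hdv⟩ := u2_mul_dV p q B β hβ
        have := (hB α hα).2
        omega
      obtain ⟨F', Q', hF', hQ'⟩ := ih (k - 2) (by omega) (u2 p q * B) hu2B
      refine ⟨A - F', B - Q', by rw [lapV_sub, hA, hF', sub_self], ?_⟩
      have hr : r2 (p + q) * B = u2 p q * B + v2 p q * B := by rw [r2_eq]; ring
      rw [hPAB]
      rw [mul_sub, hr, hQ']
      ring

end Exist

section Homog
variable (p q : ℕ)

lemma dV_le_degree (β : Fin (p + q) →₀ ℕ) : dV p q β ≤ Finsupp.degree β := by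
  rw [degree_eq_sum_univ, dV]
  exact Finset.sum_le_sum_of_subset (Finset.filter_subset _ _)

lemma lapV_eq_zero_of_dV_le_one (F : MvPolynomial (Fin (p + q)) ℂ)
    (h : ∀ β, coeff β F ≠ 0 → dV p q β ≤ 1) : lapV p q F = 0 := by
  ext β
  rw [coeff_zero]
  by_contra hc
  obtain ⟨i, hip, hc2⟩ := lapV_supp p q F β hc
  have h2 := h _ hc2
  rw [dV_add, dV_add, dV_single_of_le _ _ _ _ hip] at h2
  omega

lemma pderiv_hc {m : ℕ} (i : Fin m) (k : ℕ) (P : MvPolynomial (Fin m) ℂ) :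
    pderiv i (homogeneousComponent (k + 1) P) = homogeneousComponent k (pderiv i P) := by
  ext β
  rw [coeff_pderiv, coeff_homogeneousComponent, coeff_homogeneousComponent, coeff_pderiv]
  have hdeg : Finsupp.degree (β + Finsupp.single i 1) = Finsupp.degree β + 1 := by
    rw [degree_add', degree_single']
  rw [hdeg, mul_ite, mul_zero]
  exact if_congr (by omega) rfl rfl

lemma lapV_hc (k : ℕ) (F : MvPolynomial (Fin (p + q)) ℂ) :
    lapV p q (homogeneousComponent (k + 2) F) = homogeneousComponent k (lapV p q F) := by
  rw [lapV, lapV, map_sum]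
  refine Finset.sum_congr rfl fun i _ => ?_
  have h1 : (k + 2) = (k + 1) + 1 := by omega
  rw [h1, pderiv_hc, pderiv_hc]

lemma r2_isHomogeneous : (r2 (p + q)).IsHomogeneous 2 := by
  rw [r2]
  refine IsHomogeneous.sum _ _ _ fun i _ => ?_
  simpa using (isHomogeneous_X ℂ i).pow 2

lemma hc_r2_mul (n : ℕ) (Q : MvPolynomial (Fin (p + q)) ℂ) :
    ∃ Q', homogeneousComponent n (r2 (p + q) * Q) = r2 (p + q) * Q' := by
  refine ⟨∑ j ∈ Finset.range (Q.totalDegree + 1),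
    if n = 2 + j then homogeneousComponent j Q else 0, ?_⟩
  conv_lhs => rw [← sum_homogeneousComponent Q]
  rw [Finset.mul_sum, map_sum, Finset.mul_sum]
  refine Finset.sum_congr rfl fun j _ => ?_
  have hmem : r2 (p + q) * homogeneousComponent j Q ∈
      homogeneousSubmodule (Fin (p + q)) ℂ (2 + j) :=
    (mem_homogeneousSubmodule _ _).mpr
      ((r2_isHomogeneous p q).mul (homogeneousComponent_isHomogeneous j Q))
  rw [homogeneousComponent_of_mem hmem]
  split_ifs with h
  · rfl
  · rw [mul_zero]

end Homog

section Unique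
variable (p q : ℕ)

/-- u-degree of an exponent. -/
def dU (α : Fin (p + q) →₀ ℕ) : ℕ :=
  ∑ i ∈ univ.filter (fun i : Fin (p + q) => (i : ℕ) < p), α i

lemma dU_add (α β : Fin (p + q) →₀ ℕ) : dU p q (α + β) = dU p q α + dU p q β := by
  simp [dU, Finsupp.add_apply, Finset.sum_add_distrib]

lemma dU_single_of_le (i : Fin (p + q)) (k : ℕ) (hi : p ≤ (i : ℕ)) :
    dU p q (Finsupp.single i k) = 0 := by
  rw [dU]
  refine Finset.sum_eq_zero fun j hj => ?_
  have : (j : ℕ) < p := (Finset.mem_filter.mp hj).2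
  exact Finsupp.single_eq_of_ne (fun h => by subst h; omega)

lemma dU_single_of_lt (i : Fin (p + q)) (k : ℕ) (hi : (i : ℕ) < p) :
    dU p q (Finsupp.single i k) = k := by
  rw [dU, Finset.sum_eq_single i]
  · exact Finsupp.single_eq_same
  · intro b _ hb; exact Finsupp.single_eq_of_ne' (Ne.symm hb)
  · intro h; exact absurd (Finset.mem_filter.mpr ⟨mem_univ i, hi⟩) h

lemma dU_tsub (γ : Fin (p + q) →₀ ℕ) (i : Fin (p + q)) (k : ℕ) (hi : p ≤ (i : ℕ)) :
    dU p q (γ - Finsupp.single i k) = dU p q γ := by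
  rw [dU, dU]
  refine Finset.sum_congr rfl fun j hj => ?_
  have hjp : (j : ℕ) < p := (Finset.mem_filter.mp hj).2
  rw [Finsupp.tsub_apply, Finsupp.single_eq_of_ne (fun h => by subst h; omega), Nat.sub_zero]

/-- u-degree-graded component. -/
def uc (j : ℕ) (P : MvPolynomial (Fin (p + q)) ℂ) : MvPolynomial (Fin (p + q)) ℂ :=
  ∑ β ∈ P.support with dU p q β = j, monomial β (coeff β P)

lemma coeff_uc (j : ℕ) (P : MvPolynomial (Fin (p + q)) ℂ) (γ : Fin (p + q) →₀ ℕ) :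
    coeff γ (uc p q j P) = if dU p q γ = j then coeff γ P else 0 := by
  classical
  rw [uc, MvPolynomial.coeff_sum]
  simp_rw [coeff_monomial]
  rw [Finset.sum_ite_eq' _ γ (fun β => coeff β P)]
  by_cases hγ : γ ∈ P.support
  · by_cases hd : dU p q γ = j
    · rw [if_pos (Finset.mem_filter.mpr ⟨hγ, hd⟩), if_pos hd]
    · have hne : γ ∉ P.support.filter (fun β => dU p q β = j) :=
        fun hmem => hd (Finset.mem_filter.mp hmem).2
      rw [if_neg hne, if_neg hd]
  · have h0 : coeff γ P = 0 := MvPolynomial.notMem_support_iff.mp hγ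
    have hne : γ ∉ P.support.filter (fun β => dU p q β = j) :=
      fun hmem => hγ (Finset.mem_filter.mp hmem).1
    rw [if_neg hne, h0, ite_self]

lemma uc_zero (j : ℕ) : uc p q j 0 = 0 := by
  ext γ; rw [coeff_uc, coeff_zero, ite_self]

lemma uc_add (j : ℕ) (A B : MvPolynomial (Fin (p + q)) ℂ) :
    uc p q j (A + B) = uc p q j A + uc p q j B := by
  ext γ
  rw [coeff_add, coeff_uc, coeff_uc, coeff_uc, coeff_add]
  split_ifs <;> simp

lemma pderiv_uc (j : ℕ) (i : Fin (p + q)) (hi : p ≤ (i : ℕ))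
    (P : MvPolynomial (Fin (p + q)) ℂ) :
    pderiv i (uc p q j P) = uc p q j (pderiv i P) := by
  ext γ
  rw [coeff_pderiv, coeff_uc, coeff_uc, coeff_pderiv]
  have : dU p q (γ + Finsupp.single i 1) = dU p q γ := by
    rw [dU_add, dU_single_of_le _ _ _ _ hi, add_zero]
  rw [this, mul_ite, mul_zero]

lemma lapV_uc (j : ℕ) (D : MvPolynomial (Fin (p + q)) ℂ) :
    lapV p q (uc p q j D) = uc p q j (lapV p q D) := by
  rw [lapV, lapV]
  have : ∀ i ∈ univ.filter (fun i : Fin (p + q) => p ≤ (i : ℕ)),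
      pderiv i (pderiv i (uc p q j D)) = uc p q j (pderiv i (pderiv i D)) := by
    intro i hi
    have hip : p ≤ (i : ℕ) := (Finset.mem_filter.mp hi).2
    rw [pderiv_uc _ _ _ _ hip, pderiv_uc _ _ _ _ hip]
  rw [Finset.sum_congr rfl this]
  -- now: ∑ uc j (...) = uc j (∑ ...)
  ext γ
  rw [MvPolynomial.coeff_sum, coeff_uc, MvPolynomial.coeff_sum]
  simp_rw [coeff_uc]
  by_cases hd : dU p q γ = j
  · simp [hd]
  · simp [hd]

lemma coeff_v2_mul (R : MvPolynomial (Fin (p + q)) ℂ) (γ : Fin (p + q) →₀ ℕ) :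
    coeff γ (v2 p q * R) = ∑ i ∈ univ.filter (fun i : Fin (p + q) => p ≤ (i : ℕ)),
      (if Finsupp.single i 2 ≤ γ then coeff (γ - Finsupp.single i 2) R else 0) := by
  rw [v2, Finset.sum_mul, MvPolynomial.coeff_sum]
  refine Finset.sum_congr rfl fun i _ => ?_
  rw [X_pow_eq_monomial, coeff_monomial_mul']
  split_ifs with h
  · rw [one_mul]
  · rfl

lemma uc_v2_mul (j : ℕ) (Q : MvPolynomial (Fin (p + q)) ℂ) :
    uc p q j (v2 p q * Q) = v2 p q * uc p q j Q := by
  ext γ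
  rw [coeff_uc, coeff_v2_mul, coeff_v2_mul]
  by_cases hd : dU p q γ = j
  · rw [if_pos hd]
    refine Finset.sum_congr rfl fun i hi => ?_
    have hip : p ≤ (i : ℕ) := (Finset.mem_filter.mp hi).2
    split_ifs with h
    · rw [coeff_uc, if_pos (by rw [dU_tsub _ _ _ _ _ hip]; exact hd)]
    · rfl
  · rw [if_neg hd]
    symm
    refine Finset.sum_eq_zero fun i hi => ?_
    have hip : p ≤ (i : ℕ) := (Finset.mem_filter.mp hi).2
    split_ifs with h
    · rw [coeff_uc, if_neg (by rw [dU_tsub _ _ _ _ _ hip]; exact hd)]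
    · rfl

lemma uc_u2_mul_min (j : ℕ) (Q : MvPolynomial (Fin (p + q)) ℂ)
    (hmin : ∀ α, coeff α Q ≠ 0 → j ≤ dU p q α) :
    uc p q j (u2 p q * Q) = 0 := by
  ext γ
  rw [coeff_uc, coeff_zero]
  by_cases hd : dU p q γ = j
  · rw [if_pos hd]
    by_contra hc
    rw [u2] at hc
    obtain ⟨i, hi, α, hα, heq⟩ := mul_sumsq_supp _ _ _ hc
    have hip : (i : ℕ) < p := (Finset.mem_filter.mp hi).2
    have := hmin α hα
    have h2 : dU p q γ = dU p q α + 2 := by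
      rw [heq, dU_add, dU_single_of_lt _ _ _ _ hip]; omega
    omega
  · rw [if_neg hd]

/-- Core uniqueness: v-harmonic and divisible by r² implies zero. -/
lemma core_unique (hq : 1 ≤ q) (D Q : MvPolynomial (Fin (p + q)) ℂ)
    (hD : lapV p q D = 0) (hDQ : D = r2 (p + q) * Q) : D = 0 := by
  by_cases hQ0 : Q = 0
  · rw [hDQ, hQ0, mul_zero]
  · exfalso
    have hsne : (Q.support.image (dU p q)).Nonempty :=
      Finset.Nonempty.image (MvPolynomial.support_nonempty.mpr hQ0) _
    set j₀ := (Q.support.image (dU p q)).min' hsne with hj₀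
    obtain ⟨α₀, hα₀s, hα₀d⟩ := Finset.mem_image.mp ((Q.support.image (dU p q)).min'_mem hsne)
    have hmin : ∀ α, coeff α Q ≠ 0 → j₀ ≤ dU p q α := by
      intro α hα
      exact Finset.min'_le _ _ (Finset.mem_image_of_mem _
        (MvPolynomial.mem_support_iff.mpr hα))
    have hsplit : uc p q j₀ D = v2 p q * uc p q j₀ Q := by
      rw [hDQ, r2_eq, add_mul, uc_add, uc_u2_mul_min p q j₀ Q hmin, zero_add, uc_v2_mul]
    have hlap : lapV p q (uc p q j₀ D) = 0 := by
      rw [lapV_uc, hD, uc_zero]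
    have hzero : uc p q j₀ D = 0 :=
      harmonic_v2_eq_zero p q _ _ hlap hsplit
    have : uc p q j₀ Q = 0 := by
      rw [hzero] at hsplit
      rcases mul_eq_zero.mp hsplit.symm with h' | h'
      · exact absurd h' (v2_ne_zero p q hq)
      · exact h'
    have hc0 : coeff α₀ (uc p q j₀ Q) = coeff α₀ Q := by
      rw [coeff_uc, if_pos hα₀d]
    rw [this, coeff_zero] at hc0
    exact (MvPolynomial.mem_support_iff.mp hα₀s) hc0.symm

end Unique
end Branch

theorem stmt8 (p q n : ℕ) (hq : 1 ≤ q) (G : MvPolynomial (Fin (p + q)) ℂ)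
    (hharm : lap (p + q) G = 0) (hhom : G.IsHomogeneous n) :
    ∃! F : MvPolynomial (Fin (p + q)) ℂ,
      F.IsHomogeneous n ∧ lapV p q F = 0 ∧ ∃ Q, G - F = r2 (p + q) * Q := by
  have hGd : ∀ β, coeff β G ≠ 0 → Branch.dV p q β ≤ n := by
    intro β hβ
    have hdeg : Finsupp.degree β = n := by
      rw [Finsupp.degree_eq_weight_one]; exact hhom hβ
    calc Branch.dV p q β ≤ Finsupp.degree β := Branch.dV_le_degree p q β
      _ = n := hdeg
  obtain ⟨F₀, Q₀, hF₀, hGQ⟩ := Branch.exist_modr2 p q hq n G hGd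
  obtain ⟨Q', hQ'⟩ := Branch.hc_r2_mul p q n Q₀
  have hcnG : homogeneousComponent n G = G := by
    rw [homogeneousComponent_of_mem ((mem_homogeneousSubmodule _ _).mpr hhom), if_pos rfl]
  have hGF : G = homogeneousComponent n F₀ + r2 (p + q) * Q' := by
    conv_lhs => rw [← hcnG, hGQ]
    rw [map_add, hQ']
  have hlapF : lapV p q (homogeneousComponent n F₀) = 0 := by
    rcases n with _ | _ | m
    · apply Branch.lapV_eq_zero_of_dV_le_one
      intro β hβ
      rw [coeff_homogeneousComponent] at hβ
      by_cases h : Finsupp.degree β = 0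
      · have := Branch.dV_le_degree p q β; omega
      · rw [if_neg h] at hβ; exact absurd rfl hβ
    · apply Branch.lapV_eq_zero_of_dV_le_one
      intro β hβ
      rw [coeff_homogeneousComponent] at hβ
      by_cases h : Finsupp.degree β = 1
      · have := Branch.dV_le_degree p q β; omega
      · rw [if_neg h] at hβ; exact absurd rfl hβ
    · show lapV p q (homogeneousComponent (m + 2) F₀) = 0
      rw [Branch.lapV_hc, hF₀, map_zero]
  refine ⟨homogeneousComponent n F₀,
    ⟨homogeneousComponent_isHomogeneous n F₀, hlapF, Q', by rw [hGF]; ring⟩, ?_⟩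
  rintro y ⟨hy_hom, hy_lap, Qy, hQy⟩
  have hD : lapV p q (y - homogeneousComponent n F₀) = 0 := by
    rw [Branch.lapV_sub, hy_lap, hlapF, sub_self]
  have hsub : y - homogeneousComponent n F₀ = r2 (p + q) * (Q' - Qy) := by
    have h1 : G - homogeneousComponent n F₀ = r2 (p + q) * Q' := by rw [hGF]; ring
    linear_combination h1 - hQy
  exact sub_eq_zero.mp (Branch.core_unique p q hq _ _ hD hsub)

end
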